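/- For a finite set P of points in the plane with distinct x- and y-coordinates, there is a unique northwest hull chain of P: a subset H ⊆ P that forms a northwest monotone convex chain dominating every point of P \ H. -/

import Mathlib

/- Cross product test: `cross a b q > 0` means `q` is strictly above the (directed) line
through `a` and `b` (with `a.1 < b.1`). -/
def cross (a b q : ℝ × ℝ) : ℝ :=
  (b.1 - a.1) * (q.2 - a.2) - (b.2 - a.2) * (q.1 - a.1)

/- A northwest monotone convex chain: strictly increasing x- and y-coordinates, and no
point of the chain lies strictly above the line through any two consecutive chain points. -/
def IsNWChain (l : List (ℝ × ℝ)) : Prop :=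
  l.Chain' (fun a b => a.1 < b.1) ∧
  l.Chain' (fun a b => a.2 < b.2) ∧
  ∀ i, (h : i + 1 < l.length) → ∀ q ∈ l,
    cross (l[i]'(Nat.lt_of_succ_lt h)) (l[i+1]'h) q ≤ 0

/- Domination by the full chain (the chain augmented with the sentinels `(head.x, -∞)` and
`(+∞, tail.y)`): `p` is strictly below the vertical sentinel edge at `head.x`, strictly
below the horizontal sentinel ray at height `tail.y`, or strictly below an ordinary edge
whose x-range contains `p.x`. -/
def Dominates (l : List (ℝ × ℝ)) (p : ℝ × ℝ) : Prop :=
  (p.1 = l.head!.1 ∧ p.2 < l.head!.2) ∨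
  (l.getLast!.1 ≤ p.1 ∧ p.2 < l.getLast!.2) ∨
  ∃ i, i + 1 < l.length ∧ l[i]!.1 ≤ p.1 ∧ p.1 ≤ l[i+1]!.1 ∧ cross l[i]! l[i+1]! p < 0

/- `H` is the northwest hull chain of the finite point set `P`: a nonempty northwest
monotone convex chain of points of `P` dominating every other point of `P`. -/
def IsNWHullChain (P : Finset (ℝ × ℝ)) (H : List (ℝ × ℝ)) : Prop :=
  H ≠ [] ∧ (∀ p ∈ H, p ∈ P) ∧ IsNWChain H ∧ ∀ p ∈ P, p ∉ H → Dominates H p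


-- ============ helpers ============

theorem List.length_pos {α : Type*} {l : List α} : 0 < l.length ↔ l ≠ [] := List.length_pos_iff

theorem List.chain'_iff_pairwise {α : Type*} {R : α → α → Prop} [IsTrans α R] {l : List α} :
    List.Chain' R l ↔ List.Pairwise R l := List.isChain_iff_pairwise

theorem List.chain'_iff_get {α : Type*} {R : α → α → Prop} {l : List α} :
    List.Chain' R l ↔ ∀ (i : ℕ) (h : i < l.length - 1),
      R (l.get ⟨i, by omega⟩) (l.get ⟨i + 1, by omega⟩) := by
  simp only [List.Chain', List.isChain_iff_getElem, List.get_eq_getElem]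
  constructor
  · intro h i hi; exact h i (by omega)
  · intro h i hi; exact h i (by omega)

theorem list_getLast!_eq (l : List (ℝ×ℝ)) (h : l ≠ []) :
    l.getLast! = l[l.length-1]'(by have := List.length_pos.2 h; omega) := by
  rw [List.getLast!_eq_getElem!, getElem!_pos]

theorem list_head!_eq (l : List (ℝ×ℝ)) (h : l ≠ []) : l.head! = l[0]'(List.length_pos.2 h) := by
  cases l with | nil => simp at h | cons a t => simp

theorem cross_master (u v c d q : ℝ×ℝ) :
    (d.1 - c.1) * cross u v q
      = (d.1 - q.1) * cross u v c + (q.1 - c.1) * cross u v d + (v.1 - u.1) * cross c d q := by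
  simp only [cross]; ring

theorem cross_sub (c d a q : ℝ×ℝ) :
    cross c d q = cross c d a + (d.1-c.1)*(q.2-a.2) - (d.2-c.2)*(q.1-a.1) := by
  simp only [cross]; ring

theorem cross_decomp (a b q : ℝ×ℝ) :
    cross a b q = (b.1-q.1)*(q.2-a.2) + (q.1-a.1)*(q.2-b.2) := by
  simp only [cross]; ring

theorem cross_rot (a b c : ℝ×ℝ) : cross b c a = cross a b c := by simp only [cross]; ring
theorem cross_swap (a b c : ℝ×ℝ) : cross a c b = - cross a b c := by simp only [cross]; ring
theorem cross_aa (a b : ℝ×ℝ) : cross a b a = 0 := by simp only [cross]; ring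

instance transX : IsTrans (ℝ×ℝ) (fun a b : ℝ×ℝ => a.1 < b.1) := ⟨fun _ _ _ h1 h2 => lt_trans h1 h2⟩
instance transY : IsTrans (ℝ×ℝ) (fun a b : ℝ×ℝ => a.2 < b.2) := ⟨fun _ _ _ h1 h2 => lt_trans h1 h2⟩
instance irreflX : IsIrrefl (ℝ×ℝ) (fun a b : ℝ×ℝ => a.1 < b.1) := ⟨fun _ => lt_irrefl _⟩
instance antisymmX : IsAntisymm (ℝ×ℝ) (fun a b : ℝ×ℝ => a.1 < b.1) :=
  ⟨fun _ _ h1 h2 => absurd (lt_trans h1 h2) (lt_irrefl _)⟩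

theorem pairwise_get {R : ℝ×ℝ → ℝ×ℝ → Prop} {l : List (ℝ×ℝ)} (h : l.Pairwise R)
    {i j : ℕ} (hij : i < j) (hj : j < l.length) : R (l[i]'(lt_trans hij hj)) (l[j]'hj) := by
  have := List.pairwise_iff_get.1 h ⟨i, lt_trans hij hj⟩ ⟨j, hj⟩ hij
  simpa using this

theorem chain_x {H : List (ℝ×ℝ)} (hc : IsNWChain H) {i j : ℕ} (hij : i < j) (hj : j < H.length) :
    (H[i]'(lt_trans hij hj)).1 < (H[j]'hj).1 :=
  pairwise_get (List.chain'_iff_pairwise.1 hc.1) hij hj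

theorem chain_y {H : List (ℝ×ℝ)} (hc : IsNWChain H) {i j : ℕ} (hij : i < j) (hj : j < H.length) :
    (H[i]'(lt_trans hij hj)).2 < (H[j]'hj).2 :=
  pairwise_get (List.chain'_iff_pairwise.1 hc.2.1) hij hj

theorem chain_x_le {H : List (ℝ×ℝ)} (hc : IsNWChain H) {i j : ℕ} (hij : i ≤ j) (hj : j < H.length) :
    (H[i]'(lt_of_le_of_lt hij hj)).1 ≤ (H[j]'hj).1 := by
  rcases lt_or_eq_of_le hij with h | h
  · exact le_of_lt (chain_x hc h hj)
  · subst h; exact le_refl _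

theorem chain_y_le {H : List (ℝ×ℝ)} (hc : IsNWChain H) {i j : ℕ} (hij : i ≤ j) (hj : j < H.length) :
    (H[i]'(lt_of_le_of_lt hij hj)).2 ≤ (H[j]'hj).2 := by
  rcases lt_or_eq_of_le hij with h | h
  · exact le_of_lt (chain_y hc h hj)
  · subst h; exact le_refl _

-- ============ hull chain structural lemmas ============

section Hull

variable {P : Finset (ℝ×ℝ)} {H : List (ℝ×ℝ)}

theorem hull_head_mem (hH : IsNWHullChain P H) :
    (H[0]'(List.length_pos.2 hH.1)) ∈ P :=
  hH.2.1 _ (List.getElem_mem _)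

theorem hull_last_mem (hH : IsNWHullChain P H) :
    (H[H.length-1]'(by have := List.length_pos.2 hH.1; omega)) ∈ P :=
  hH.2.1 _ (List.getElem_mem _)

/-- the head of the hull chain has minimal x among `P` -/
theorem lemE (hH : IsNWHullChain P H) {q : ℝ×ℝ} (hq : q ∈ P) :
    (H[0]'(List.length_pos.2 hH.1)).1 ≤ q.1 := by
  obtain ⟨hne, hsub, hc, hdom⟩ := hH
  have hlen := List.length_pos.2 hne
  by_cases hqH : q ∈ H
  · obtain ⟨j, hj, rfl⟩ := List.mem_iff_getElem.1 hqH
    exact chain_x_le hc (Nat.zero_le _) hj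
  · rcases hdom q hq hqH with ⟨h1, _⟩ | ⟨h1, _⟩ | ⟨i, hi, h1, _, _⟩
    · rw [list_head!_eq _ hne] at h1; exact le_of_eq h1.symm
    · rw [list_getLast!_eq _ hne] at h1
      exact le_trans (chain_x_le hc (by omega) (by omega)) h1
    · rw [getElem!_pos H i (by omega)] at h1
      exact le_trans (chain_x_le hc (Nat.zero_le _) (by omega)) h1

/-- the last point of the hull chain has maximal y among `P` -/
theorem lemC (hH : IsNWHullChain P H)
    (hx : ∀ p ∈ P, ∀ q ∈ P, p ≠ q → p.1 ≠ q.1) {q : ℝ×ℝ} (hq : q ∈ P) :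
    q.2 ≤ (H[H.length-1]'(by have := List.length_pos.2 hH.1; omega)).2 := by
  obtain ⟨hne, hsub, hc, hdom⟩ := hH
  have hlen := List.length_pos.2 hne
  by_cases hqH : q ∈ H
  · obtain ⟨j, hj, rfl⟩ := List.mem_iff_getElem.1 hqH
    exact chain_y_le hc (by omega) (by omega)
  · rcases hdom q hq hqH with ⟨h1, h2⟩ | ⟨h1, h2⟩ | ⟨i, hi, h1, h2, h3⟩
    · rw [list_head!_eq _ hne] at h1
      have hh : (H[0]'hlen) ∈ P := hsub _ (List.getElem_mem _)
      have : q ≠ H[0]'hlen := fun he => hqH (he ▸ List.getElem_mem _)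
      exact absurd h1 (hx q hq _ hh this)
    · rw [list_getLast!_eq _ hne] at h2; exact le_of_lt h2
    · rw [getElem!_pos H i (by omega)] at h1 h3
      rw [getElem!_pos H (i+1) hi] at h2 h3
      have hcd1 : (H[i]'(by omega)).1 < (H[i+1]'hi).1 := chain_x hc (by omega) hi
      have hcd2 : (H[i]'(by omega)).2 < (H[i+1]'hi).2 := chain_y hc (by omega) hi
      have hqd : q.2 < (H[i+1]'hi).2 := by
        set c := H[i]'(by omega); set d := H[i+1]'hi
        rw [cross_decomp] at h3
        by_contra hcon
        push_neg at hcon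
        nlinarith [mul_nonneg (sub_nonneg.2 h2) (by linarith : (0:ℝ) ≤ q.2 - c.2),
          mul_nonneg (sub_nonneg.2 h1) (by linarith : (0:ℝ) ≤ q.2 - d.2)]
      exact le_of_lt (lt_of_lt_of_le hqd (chain_y_le hc (by omega) (by omega)))

/-- every point of `P` lies on or below every edge line of the hull chain -/
theorem lemB (hH : IsNWHullChain P H)
    (hx : ∀ p ∈ P, ∀ q ∈ P, p ≠ q → p.1 ≠ q.1)
    {i : ℕ} (hi : i + 1 < H.length) {q : ℝ×ℝ} (hq : q ∈ P) :
    cross (H[i]'(by omega)) (H[i+1]'hi) q ≤ 0 := by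
  obtain ⟨hne, hsub, hc, hdom⟩ := hH
  have hlen := List.length_pos.2 hne
  set c := H[i]'(by omega) with hcdef
  set d := H[i+1]'hi with hddef
  have hcd1 : c.1 < d.1 := chain_x hc (by omega) hi
  have hcd2 : c.2 < d.2 := chain_y hc (by omega) hi
  by_cases hqH : q ∈ H
  · exact hc.2.2 i hi q hqH
  · rcases hdom q hq hqH with ⟨h1, h2⟩ | ⟨h1, h2⟩ | ⟨j, hj, h1, h2, h3⟩
    · rw [list_head!_eq _ hne] at h1
      have hh : (H[0]'hlen) ∈ P := hsub _ (List.getElem_mem _)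
      have : q ≠ H[0]'hlen := fun he => hqH (he ▸ List.getElem_mem _)
      exact absurd h1 (hx q hq _ hh this)
    · rw [list_getLast!_eq _ hne] at h1 h2
      set w := H[H.length-1]'(by omega) with hwdef
      have hcw : cross c d w ≤ 0 := hc.2.2 i hi w (List.getElem_mem _)
      have hdw : d.2 ≤ w.2 := chain_y_le hc (by omega) (by omega)
      rw [cross_sub c d w q]
      nlinarith [mul_pos (by linarith : (0:ℝ) < d.1 - c.1) (by linarith : (0:ℝ) < w.2 - q.2),
        mul_nonneg (by linarith : (0:ℝ) ≤ d.2 - c.2) (by linarith : (0:ℝ) ≤ q.1 - w.1)]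
    · rw [getElem!_pos H j (by omega)] at h1 h3
      rw [getElem!_pos H (j+1) hj] at h2 h3
      set e := H[j]'(by omega) with hedef
      set f := H[j+1]'hj with hfdef
      have hef : e.1 < f.1 := chain_x hc (by omega) hj
      have hce : cross c d e ≤ 0 := hc.2.2 i hi e (List.getElem_mem _)
      have hcf : cross c d f ≤ 0 := hc.2.2 i hi f (List.getElem_mem _)
      have key := cross_master c d e f q
      have t1 : (f.1 - q.1) * cross c d e ≤ 0 :=
        mul_nonpos_of_nonneg_of_nonpos (by linarith) hce
      have t2 : (q.1 - e.1) * cross c d f ≤ 0 :=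
        mul_nonpos_of_nonneg_of_nonpos (by linarith) hcf
      have t3 : (d.1 - c.1) * cross e f q < 0 :=
        mul_neg_of_pos_of_neg (by linarith) h3
      have hlt : (f.1 - e.1) * cross c d q < 0 := by rw [key]; linarith
      nlinarith [hlt]


theorem dominates_mid (hH : IsNWHullChain P H) {q : ℝ×ℝ}
    (hq1 : (H[0]'(List.length_pos.2 hH.1)).1 < q.1)
    (hq2 : q.1 < (H[H.length-1]'(by have := List.length_pos.2 hH.1; omega)).1)
    (hcr : ∀ i, (h : i + 1 < H.length) → (H[i]'(by omega)).1 ≤ q.1 → q.1 ≤ (H[i+1]'h).1 →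
      cross (H[i]'(by omega)) (H[i+1]'h) q < 0) :
    Dominates H q := by
  have hne := hH.1
  have hlen := List.length_pos.2 hne
  classical
  set pr : ℕ → Prop := fun j => j < H.length ∧ (H[j]!).1 ≤ q.1 with hpr
  have hpr0 : pr 0 := ⟨hlen, by rw [getElem!_pos H 0 hlen]; exact le_of_lt hq1⟩
  set i := Nat.findGreatest pr (H.length - 1) with hidef
  have hile : i ≤ H.length - 1 := Nat.findGreatest_le _
  have hspec : pr i := Nat.findGreatest_spec (Nat.zero_le _) hpr0
  have hi1 : (H[i]'(by omega)).1 ≤ q.1 := by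
    have := hspec.2; rwa [getElem!_pos H i (by omega)] at this
  have hilt : i < H.length - 1 := by
    rcases lt_or_eq_of_le hile with h | h
    · exact h
    · exfalso
      apply not_le.2 hq2
      have heq : (H[i]'(by omega)) = (H[H.length-1]'(by omega)) := by congr 1
      rw [← heq]
      exact hi1
  have hnot : ¬ pr (i+1) := Nat.findGreatest_is_greatest (by rw [← hidef]; omega) (by omega)
  have hi2 : q.1 ≤ (H[i+1]'(by omega)).1 := by
    by_contra hcon
    push_neg at hcon
    exact hnot ⟨by omega, by rw [getElem!_pos H (i+1) (by omega)]; exact le_of_lt hcon⟩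
  refine Or.inr (Or.inr ⟨i, by omega, ?_, ?_, ?_⟩)
  · rw [getElem!_pos H i (by omega)]; exact hi1
  · rw [getElem!_pos H (i+1) (by omega)]; exact hi2
  · rw [getElem!_pos H i (by omega), getElem!_pos H (i+1) (by omega)]
    exact hcr i (by omega) hi1 hi2

/-- a point strictly to the south-east of some point of `P` is dominated -/
theorem dom_of_SE (hH : IsNWHullChain P H)
    (hx : ∀ p ∈ P, ∀ q ∈ P, p ≠ q → p.1 ≠ q.1)
    {a q : ℝ×ℝ} (ha : a ∈ P) (h1 : a.1 < q.1) (h2 : q.2 < a.2) :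
    Dominates H q := by
  have hne := hH.1
  have hlen := List.length_pos.2 hne
  have hc := hH.2.2.1
  have hql : q.2 < (H[H.length-1]'(by omega)).2 := lt_of_lt_of_le h2 (lemC hH hx ha)
  by_cases hlast : (H[H.length-1]'(by omega)).1 ≤ q.1
  · refine Or.inr (Or.inl ?_)
    rw [list_getLast!_eq _ hne]
    exact ⟨hlast, hql⟩
  · push_neg at hlast
    refine dominates_mid hH (lt_of_le_of_lt (lemE hH ha) h1) hlast ?_
    intro i hi _ _
    have hba : cross (H[i]'(by omega)) (H[i+1]'hi) a ≤ 0 := lemB hH hx hi ha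
    have hcd1 : (H[i]'(by omega)).1 < (H[i+1]'hi).1 := chain_x hc (by omega) hi
    have hcd2 : (H[i]'(by omega)).2 < (H[i+1]'hi).2 := chain_y hc (by omega) hi
    rw [cross_sub _ _ a q]
    nlinarith [mul_pos (by linarith : (0:ℝ) < (H[i+1]'hi).1 - (H[i]'(by omega)).1)
        (by linarith : (0:ℝ) < a.2 - q.2),
      mul_nonneg (by linarith : (0:ℝ) ≤ (H[i+1]'hi).2 - (H[i]'(by omega)).2)
        (by linarith : (0:ℝ) ≤ q.1 - a.1)]

/-- a point strictly below a segment joining two points of `P` is dominated -/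
theorem dom_of_below (hH : IsNWHullChain P H)
    (hx : ∀ p ∈ P, ∀ q ∈ P, p ≠ q → p.1 ≠ q.1)
    {a b q : ℝ×ℝ} (ha : a ∈ P) (hb : b ∈ P) (h1 : a.1 < q.1) (h2 : q.1 < b.1)
    (h3 : cross a b q < 0) :
    Dominates H q := by
  have hne := hH.1
  have hlen := List.length_pos.2 hne
  have hc := hH.2.2.1
  have hql : q.2 < (H[H.length-1]'(by omega)).2 := by
    have ha2 := lemC hH hx ha
    have hb2 := lemC hH hx hb
    rw [cross_decomp] at h3
    by_contra hcon
    push_neg at hcon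
    nlinarith [mul_nonneg (by linarith : (0:ℝ) ≤ b.1 - q.1) (by linarith : (0:ℝ) ≤ q.2 - a.2),
      mul_nonneg (by linarith : (0:ℝ) ≤ q.1 - a.1) (by linarith : (0:ℝ) ≤ q.2 - b.2)]
  by_cases hlast : (H[H.length-1]'(by omega)).1 ≤ q.1
  · refine Or.inr (Or.inl ?_)
    rw [list_getLast!_eq _ hne]
    exact ⟨hlast, hql⟩
  · push_neg at hlast
    refine dominates_mid hH (lt_of_le_of_lt (lemE hH ha) h1) hlast ?_
    intro i hi _ _
    set c := H[i]'(by omega) with hcdef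
    set d := H[i+1]'hi with hddef
    have hca : cross c d a ≤ 0 := lemB hH hx hi ha
    have hcb : cross c d b ≤ 0 := lemB hH hx hi hb
    have hcd1 : c.1 < d.1 := chain_x hc (by omega) hi
    have key := cross_master c d a b q
    have t1 : (b.1 - q.1) * cross c d a ≤ 0 :=
      mul_nonpos_of_nonneg_of_nonpos (by linarith) hca
    have t2 : (q.1 - a.1) * cross c d b ≤ 0 :=
      mul_nonpos_of_nonneg_of_nonpos (by linarith) hcb
    have t3 : (d.1 - c.1) * cross a b q < 0 :=
      mul_neg_of_pos_of_neg (by linarith) h3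
    have hlt : (b.1 - a.1) * cross c d q < 0 := by rw [key]; linarith
    nlinarith [hlt]

/-- extending the point set by a dominated point keeps the hull chain -/
theorem hull_extend {b : ℝ×ℝ} (hb : b ∈ P) (hH : IsNWHullChain (P.erase b) H)
    (hdom : Dominates H b) : IsNWHullChain P H := by
  refine ⟨hH.1, fun p hp => Finset.mem_of_mem_erase (hH.2.1 p hp), hH.2.2.1, ?_⟩
  intro p hp hpH
  by_cases hpb : p = b
  · subst hpb; exact hdom
  · exact hH.2.2.2 p (Finset.mem_erase.2 ⟨hpb, hp⟩) hpH

end Hull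

-- ============ existence ============

theorem cross_abb (a b : ℝ×ℝ) : cross a b b = 0 := by simp only [cross]; ring

def rlex (a b : ℝ×ℝ) : Prop := a.1 < b.1 ∨ (a.1 = b.1 ∧ a.2 ≤ b.2)

noncomputable instance : DecidableRel rlex := fun _ _ => Classical.dec _

instance : IsTrans (ℝ×ℝ) rlex :=
  ⟨by rintro a b c (h | ⟨e, h⟩) (h' | ⟨e', h'⟩)
      · exact Or.inl (by linarith)
      · exact Or.inl (by linarith)
      · exact Or.inl (by linarith)
      · exact Or.inr ⟨by linarith, by linarith⟩⟩

instance : IsAntisymm (ℝ×ℝ) rlex :=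
  ⟨by rintro a b (h | ⟨e, h⟩) (h' | ⟨e', h'⟩)
      · linarith
      · linarith
      · linarith
      · exact Prod.ext_iff.2 ⟨e, le_antisymm h h'⟩⟩

instance : IsTotal (ℝ×ℝ) rlex :=
  ⟨by intro a b
      rcases lt_trichotomy a.1 b.1 with h | h | h
      · exact Or.inl (Or.inl h)
      · rcases le_total a.2 b.2 with h' | h'
        · exact Or.inl (Or.inr ⟨h, h'⟩)
        · exact Or.inr (Or.inr ⟨h.symm, h'⟩)
      · exact Or.inr (Or.inl h)⟩

theorem exists_hull : ∀ P : Finset (ℝ×ℝ), P.Nonempty →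
    (∀ p ∈ P, ∀ q ∈ P, p ≠ q → p.1 ≠ q.1) →
    (∀ p ∈ P, ∀ q ∈ P, p ≠ q → p.2 ≠ q.2) →
    ∃ H, IsNWHullChain P H := by
  intro P
  induction P using Finset.strongInductionOn with
  | _ P IH =>
  intro hP hx hy
  classical
  set L := Finset.sort P rlex with hLdef
  have memL : ∀ a : ℝ×ℝ, a ∈ L ↔ a ∈ P := fun a => Finset.mem_sort _
  have nodupL : L.Nodup := Finset.sort_nodup _ _
  have sortedL : L.Pairwise rlex := Finset.pairwise_sort _ _
  have hlenL : L.length = P.card := Finset.length_sort _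
  have Lne : L ≠ [] := by
    intro h
    have := Finset.card_pos.2 hP
    rw [← hlenL, h] at this
    simp at this
  have chainX : L.Chain' (fun p q => p.1 < q.1) := by
    rw [List.chain'_iff_get]
    intro i h
    have hr : rlex (L.get ⟨i, by omega⟩) (L.get ⟨i+1, by omega⟩) :=
      List.pairwise_iff_get.1 sortedL ⟨i, by omega⟩ ⟨i+1, by omega⟩ (by simp [Fin.lt_def])
    have hmem1 : L.get ⟨i, by omega⟩ ∈ P := (memL _).1 (L.get_mem _)
    have hmem2 : L.get ⟨i+1, by omega⟩ ∈ P := (memL _).1 (L.get_mem _)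
    have hne2 : L.get ⟨i, by omega⟩ ≠ L.get ⟨i+1, by omega⟩ := by
      intro he
      have := List.nodup_iff_injective_get.1 nodupL he
      simp [Fin.ext_iff] at this
    rcases hr with h' | ⟨h1, _⟩
    · exact h'
    · exact absurd h1 (hx _ hmem1 _ hmem2 hne2)
  have pwX : L.Pairwise (fun p q : ℝ×ℝ => p.1 < q.1) := List.chain'_iff_pairwise.1 chainX
  have hxlt : ∀ {j k : ℕ} (hjk : j < k) (hk : k < L.length),
      (L[j]'(lt_trans hjk hk)).1 < (L[k]'hk).1 := fun hjk hk => pairwise_get pwX hjk hk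
  by_cases hcy : L.Chain' (fun p q : ℝ×ℝ => p.2 < q.2)
  · by_cases hconv : ∀ i, (h : i + 1 < L.length) → ∀ q ∈ L,
        cross (L[i]'(Nat.lt_of_succ_lt h)) (L[i+1]'h) q ≤ 0
    · exact ⟨L, Lne, fun p hp => (memL p).1 hp, ⟨chainX, hcy, hconv⟩,
        fun p hp hpl => absurd ((memL p).2 hp) hpl⟩
    · push_neg at hconv
      obtain ⟨i, hi, q, hqL, hq⟩ := hconv
      set a := L[i]'(Nat.lt_of_succ_lt hi) with hadef
      set b := L[i+1]'hi with hbdef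
      have haP : a ∈ P := (memL _).1 (List.getElem_mem _)
      have hbP : b ∈ P := (memL _).1 (List.getElem_mem _)
      have hqP : q ∈ P := (memL _).1 hqL
      have hab : a.1 < b.1 := hxlt (by omega) hi
      obtain ⟨j, hj, hjq⟩ := List.mem_iff_getElem.1 hqL
      have hqa : q ≠ a := by
        intro he; rw [he, cross_aa] at hq; exact lt_irrefl _ hq
      have hqb : q ≠ b := by
        intro he; rw [he, cross_abb] at hq; exact lt_irrefl _ hq
      have hji : j ≠ i := by
        intro he
        apply hqa
        rw [← hjq, hadef]
        congr 1
      have hji1 : j ≠ i + 1 := by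
        intro he
        apply hqb
        rw [← hjq, hbdef]
        congr 1
      rcases Nat.lt_or_ge j i with hlt | hge
      · -- q is strictly left of a : remove a, witnesses q and b
        have hqa1 : q.1 < a.1 := by rw [← hjq]; exact hxlt hlt (by omega)
        have hP' : q ∈ P.erase a := Finset.mem_erase.2 ⟨hqa, hqP⟩
        have hb' : b ∈ P.erase a := Finset.mem_erase.2 ⟨fun he => by rw [he] at hab; linarith, hbP⟩
        obtain ⟨H, hH⟩ := IH (P.erase a) (Finset.erase_ssubset haP) ⟨q, hP'⟩
          (fun p hp r hr => hx p (Finset.mem_of_mem_erase hp) r (Finset.mem_of_mem_erase hr))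
          (fun p hp r hr => hy p (Finset.mem_of_mem_erase hp) r (Finset.mem_of_mem_erase hr))
        have hcr : cross q b a < 0 := by
          rw [show cross q b a = - cross a b q by rw [← cross_swap, cross_rot]]
          linarith
        exact ⟨H, hull_extend haP hH (dom_of_below hH
          (fun p hp r hr => hx p (Finset.mem_of_mem_erase hp) r (Finset.mem_of_mem_erase hr))
          hP' hb' hqa1 hab hcr)⟩
      · -- q is strictly right of b : remove b, witnesses a and q
        have hgt : i + 1 < j := by omega
        have hqb1 : b.1 < q.1 := by
          rw [← hjq]; exact hxlt hgt hj
        have ha' : a ∈ P.erase b := Finset.mem_erase.2 ⟨fun he => by rw [he] at hab; linarith, haP⟩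
        have hq' : q ∈ P.erase b := Finset.mem_erase.2 ⟨hqb, hqP⟩
        obtain ⟨H, hH⟩ := IH (P.erase b) (Finset.erase_ssubset hbP) ⟨a, ha'⟩
          (fun p hp r hr => hx p (Finset.mem_of_mem_erase hp) r (Finset.mem_of_mem_erase hr))
          (fun p hp r hr => hy p (Finset.mem_of_mem_erase hp) r (Finset.mem_of_mem_erase hr))
        have hcr : cross a q b < 0 := by
          rw [cross_swap]; linarith
        exact ⟨H, hull_extend hbP hH (dom_of_below hH
          (fun p hp r hr => hx p (Finset.mem_of_mem_erase hp) r (Finset.mem_of_mem_erase hr))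
          ha' hq' hab hqb1 hcr)⟩
  · -- y-monotonicity violated : some b is strictly south-east of its predecessor a
    rw [List.chain'_iff_get] at hcy
    push_neg at hcy
    obtain ⟨i, hi, hnot⟩ := hcy
    set a := L.get ⟨i, by omega⟩ with hadef
    set b := L.get ⟨i+1, by omega⟩ with hbdef
    have haP : a ∈ P := (memL _).1 (L.get_mem _)
    have hbP : b ∈ P := (memL _).1 (L.get_mem _)
    have hab : a.1 < b.1 := by
      have := hxlt (j := i) (k := i+1) (by omega) (by omega)
      simpa [hadef, hbdef] using this
    have hne2 : b ≠ a := fun he => by rw [he] at hab; linarith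
    have hba2 : b.2 < a.2 := lt_of_le_of_ne hnot (hy b hbP a haP hne2)
    have ha' : a ∈ P.erase b := Finset.mem_erase.2 ⟨hne2.symm, haP⟩
    obtain ⟨H, hH⟩ := IH (P.erase b) (Finset.erase_ssubset hbP) ⟨a, ha'⟩
      (fun p hp r hr => hx p (Finset.mem_of_mem_erase hp) r (Finset.mem_of_mem_erase hr))
      (fun p hp r hr => hy p (Finset.mem_of_mem_erase hp) r (Finset.mem_of_mem_erase hr))
    exact ⟨H, hull_extend hbP hH (dom_of_SE hH
      (fun p hp r hr => hx p (Finset.mem_of_mem_erase hp) r (Finset.mem_of_mem_erase hr))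
      ha' hab hba2)⟩

-- ============ uniqueness ============

/-- supporting line at a hull chain vertex: all of `P` lies on or below it -/
theorem support {P : Finset (ℝ×ℝ)} {H : List (ℝ×ℝ)} (hH : IsNWHullChain P H)
    (hx : ∀ p ∈ P, ∀ q ∈ P, p ≠ q → p.1 ≠ q.1)
    {p : ℝ×ℝ} (hp : p ∈ H) :
    ∃ v : ℝ×ℝ, p.1 < v.1 ∧ p.2 ≤ v.2 ∧ ∀ q ∈ P, cross p v q ≤ 0 := by
  have hne := hH.1
  have hc := hH.2.2.1
  have hlen := List.length_pos.2 hne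
  obtain ⟨k, hk, rfl⟩ := List.mem_iff_getElem.1 hp
  by_cases hk1 : k + 1 < H.length
  · refine ⟨H[k+1]'hk1, chain_x hc (by omega) hk1, le_of_lt (chain_y hc (by omega) hk1), ?_⟩
    intro q hq
    exact lemB hH hx hk1 hq
  · have hke : k = H.length - 1 := by omega
    refine ⟨((H[k]'hk).1 + 1, (H[k]'hk).2), by simp, le_refl _, ?_⟩
    intro q hq
    have hly : q.2 ≤ (H[H.length-1]'(by omega)).2 := lemC hH hx hq
    have heq : (H[k]'hk) = (H[H.length-1]'(by omega)) := by congr 1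
    have : cross (H[k]'hk) ((H[k]'hk).1 + 1, (H[k]'hk).2) q = q.2 - (H[k]'hk).2 := by
      simp only [cross]; ring
    rw [this, heq]
    linarith

theorem hull_subset {P : Finset (ℝ×ℝ)} {H1 H2 : List (ℝ×ℝ)}
    (hH1 : IsNWHullChain P H1) (hH2 : IsNWHullChain P H2)
    (hx : ∀ p ∈ P, ∀ q ∈ P, p ≠ q → p.1 ≠ q.1)
    (hy : ∀ p ∈ P, ∀ q ∈ P, p ≠ q → p.2 ≠ q.2) :
    ∀ p ∈ H1, p ∈ H2 := by
  intro p hp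
  by_contra hp2
  have hpP : p ∈ P := hH1.2.1 p hp
  obtain ⟨v, hv1, hv2, hvq⟩ := support hH1 hx hp
  have hne2 := hH2.1
  have hlen2 := List.length_pos.2 hne2
  have hc2 := hH2.2.2.1
  rcases hH2.2.2.2 p hpP hp2 with ⟨h1, h2⟩ | ⟨h1, h2⟩ | ⟨i, hi, h1, h2, h3⟩
  · -- vertical sentinel case : p would coincide with the head of H2
    rw [list_head!_eq _ hne2] at h1
    have hh : (H2[0]'hlen2) ∈ P := hH2.2.1 _ (List.getElem_mem _)
    have hnep : p ≠ H2[0]'hlen2 := fun he => hp2 (he ▸ List.getElem_mem _)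
    exact hx p hpP _ hh hnep h1
  · -- horizontal sentinel case
    rw [list_getLast!_eq _ hne2] at h1 h2
    set w := H2[H2.length-1]'(by omega) with hwdef
    have hwP : w ∈ P := hH2.2.1 _ (List.getElem_mem _)
    have hnep : p ≠ w := fun he => hp2 (he ▸ List.getElem_mem _)
    have hw1 : w.1 < p.1 := lt_of_le_of_ne h1 (hx w hwP p hpP (fun he => hnep he.symm))
    have := hvq w hwP
    simp only [cross] at this
    nlinarith [mul_pos (by linarith : (0:ℝ) < v.1 - p.1) (by linarith : (0:ℝ) < w.2 - p.2),
      mul_nonneg (by linarith : (0:ℝ) ≤ v.2 - p.2) (by linarith : (0:ℝ) ≤ p.1 - w.1)]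
  · -- edge case
    rw [getElem!_pos H2 i (by omega)] at h1 h3
    rw [getElem!_pos H2 (i+1) hi] at h2 h3
    set c := H2[i]'(by omega) with hcdef
    set d := H2[i+1]'hi with hddef
    have hcP : c ∈ P := hH2.2.1 _ (List.getElem_mem _)
    have hdP : d ∈ P := hH2.2.1 _ (List.getElem_mem _)
    have hcd1 : c.1 < d.1 := chain_x hc2 (by omega) hi
    have key := cross_master p v c d p
    have t1 : (d.1 - p.1) * cross p v c ≤ 0 :=
      mul_nonpos_of_nonneg_of_nonpos (by linarith) (hvq c hcP)
    have t2 : (p.1 - c.1) * cross p v d ≤ 0 :=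
      mul_nonpos_of_nonneg_of_nonpos (by linarith) (hvq d hdP)
    have t3 : (v.1 - p.1) * cross c d p < 0 :=
      mul_neg_of_pos_of_neg (by linarith) h3
    rw [cross_aa, mul_zero] at key
    linarith

theorem hull_unique {P : Finset (ℝ×ℝ)} {H1 H2 : List (ℝ×ℝ)}
    (hH1 : IsNWHullChain P H1) (hH2 : IsNWHullChain P H2)
    (hx : ∀ p ∈ P, ∀ q ∈ P, p ≠ q → p.1 ≠ q.1)
    (hy : ∀ p ∈ P, ∀ q ∈ P, p ≠ q → p.2 ≠ q.2) :
    H1 = H2 := by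
  have pw1 : H1.Pairwise (fun p q : ℝ×ℝ => p.1 < q.1) := List.chain'_iff_pairwise.1 hH1.2.2.1.1
  have pw2 : H2.Pairwise (fun p q : ℝ×ℝ => p.1 < q.1) := List.chain'_iff_pairwise.1 hH2.2.2.1.1
  have nd1 : H1.Nodup := pw1.nodup
  have nd2 : H2.Nodup := pw2.nodup
  have hmem : ∀ a, a ∈ H1 ↔ a ∈ H2 :=
    fun a => ⟨hull_subset hH1 hH2 hx hy a, hull_subset hH2 hH1 hx hy a⟩
  exact List.Perm.eq_of_pairwise' pw1 pw2 ((List.perm_ext_iff_of_nodup nd1 nd2).2 hmem)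

/- STATEMENT 12: a finite nonempty planar point set with pairwise distinct x- and
y-coordinates has a unique northwest hull chain. -/
theorem nw_hull_chain_exists_unique (P : Finset (ℝ × ℝ)) (hP : P.Nonempty)
    (hx : ∀ p ∈ P, ∀ q ∈ P, p ≠ q → p.1 ≠ q.1)
    (hy : ∀ p ∈ P, ∀ q ∈ P, p ≠ q → p.2 ≠ q.2) :
    ∃! H : List (ℝ × ℝ), IsNWHullChain P H := by
  obtain ⟨H, hH⟩ := exists_hull P hP hx hy
  exact ⟨H, hH, fun H' hH' => hull_unique hH' hH hx hy⟩
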